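/- Let W be a future-infinite causal worldline in M and let p ∈ ∂I⁻(W). Then there exists a vector v ∈ E with ‖v‖ = 1 such that p + t • (1, v) ∈ ∂I⁻(W) for all t ∈ [0, ∞); that is, through every point of the causal horizon ∂I⁻(W) there passes a future-infinite null geodesic contained in ∂I⁻(W). (Minkowski-spacetime instance of the paper's unnumbered Proposition on horizon generators.) -/

import Mathlib

open Set Metric

noncomputable section

/-- Spatial Euclidean factor. -/
abbrev E (n : ℕ) : Type := EuclideanSpace ℝ (Fin n)

/-- Minkowski spacetime `M = ℝ × E`. -/
abbrev M (n : ℕ) : Type := ℝ × E n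

variable {n : ℕ}

/-- Chronological relation `p ≪ q`. -/
def chron (p q : M n) : Prop := dist p.2 q.2 < q.1 - p.1

/-- Causal relation `p ≼ q`. -/
def causal (p q : M n) : Prop := dist p.2 q.2 ≤ q.1 - p.1

/-- Chronological future `I⁺(S)`. -/
def Iplus (S : Set (M n)) : Set (M n) := {q | ∃ p ∈ S, chron p q}

/-- Chronological past `I⁻(S)`. -/
def Iminus (S : Set (M n)) : Set (M n) := {q | ∃ p ∈ S, chron q p}

/-- `I(S) = I⁺(S) ∪ I⁻(S)`. -/
def Iboth (S : Set (M n)) : Set (M n) := Iplus S ∪ Iminus S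

/-- Causal future `J⁺(S)`. -/
def Jplus (S : Set (M n)) : Set (M n) := {q | ∃ p ∈ S, causal p q}

/-- Causal past `J⁻(S)`. -/
def Jminus (S : Set (M n)) : Set (M n) := {q | ∃ p ∈ S, causal q p}

/-- A set is achronal if no two of its points are chronologically related. -/
def Achronal (S : Set (M n)) : Prop := ∀ p ∈ S, ∀ q ∈ S, ¬ chron p q

/-- A set is acausal if no two distinct points of it are causally related. -/
def Acausal (S : Set (M n)) : Prop := ∀ p ∈ S, ∀ q ∈ S, p ≠ q → ¬ causal p q

/-- `edge(a)`: points `p ∈ closure a` such that every open neighborhood `O` of `p`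
contains `q, r` with `r ≪ p ≪ q` together with a continuous timelike curve in `O`
from `r` to `q` avoiding `a`. -/
def edge (a : Set (M n)) : Set (M n) :=
  {p | p ∈ closure a ∧ ∀ O : Set (M n), IsOpen O → p ∈ O →
    ∃ q ∈ O, ∃ r ∈ O, chron r p ∧ chron p q ∧
      ∃ γ : ℝ → M n, ContinuousOn γ (Icc 0 1) ∧ γ 0 = r ∧ γ 1 = q ∧
        (∀ s ∈ Icc (0:ℝ) 1, γ s ∈ O ∧ γ s ∉ a) ∧
        (∀ s ∈ Icc (0:ℝ) 1, ∀ t ∈ Icc (0:ℝ) 1, s < t → chron (γ s) (γ t))}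

/-- A slice: a closed achronal set with empty edge. -/
def IsSlice (Sg : Set (M n)) : Prop := IsClosed Sg ∧ Achronal Sg ∧ edge Sg = ∅

/-- A hypersurface in the slice `Sg`: a subset open in the subspace topology of `Sg`. -/
def IsHypersurfaceIn (Sg a : Set (M n)) : Prop :=
  a ⊆ Sg ∧ IsOpen ((Subtype.val : Sg → M n) ⁻¹' a)

/-- A hypersurface: subset of some slice, open in the slice's subspace topology. -/
def IsHypersurface (a : Set (M n)) : Prop := ∃ Sg, IsSlice Sg ∧ IsHypersurfaceIn Sg a

/-- The frontier (boundary) of `a` in the subspace topology of `Sg`,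
viewed as a subset of spacetime. -/
def frontierIn (Sg a : Set (M n)) : Set (M n) :=
  (Subtype.val : Sg → M n) '' frontier ((Subtype.val : Sg → M n) ⁻¹' a)

/-- A future-infinite causal worldline: the graph `{(t, x t) : t ≥ t₀}` of a
1-Lipschitz map defined on `[t₀, ∞)`. -/
def IsWorldline (W : Set (M n)) : Prop :=
  ∃ t₀ : ℝ, ∃ x : ℝ → E n, LipschitzOnWith 1 x (Ici t₀) ∧
    W = {p : M n | t₀ ≤ p.1 ∧ p.2 = x p.1}

/-- Domain of dependence `D(S)`: points through which every inextendible causal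
curve (graph of a 1-Lipschitz map `ℝ → E`) meets `S`. -/
def Dom (S : Set (M n)) : Set (M n) :=
  {p | ∀ x : ℝ → E n, LipschitzWith 1 x → x p.1 = p.2 → ∃ t : ℝ, (t, x t) ∈ S}

/-- Future domain of dependence `D⁺(S)`: every inextendible causal curve through `p`
meets `S` at some time `t ≤ p.1`. -/
def DomPlus (S : Set (M n)) : Set (M n) :=
  {p | ∀ x : ℝ → E n, LipschitzWith 1 x → x p.1 = p.2 →
    ∃ t : ℝ, t ≤ p.1 ∧ (t, x t) ∈ S}

/-- A `C¹` function has timelike gradient if at every point `∂T/∂t > ‖∇_E T‖`. -/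
def TimelikeGrad (T : M n → ℝ) : Prop :=
  ∀ p : M n,
    ‖(fderiv ℝ T p).comp (ContinuousLinearMap.inr ℝ ℝ (E n))‖ <
      fderiv ℝ T p ((1 : ℝ), (0 : E n))

/-- A past directed outward null deformation of the hypersurface `a` within the
open set `O`. -/
def IsPastOutwardNullDeformation (a O b : Set (M n)) : Prop :=
  IsHypersurface b ∧ Dom a ⊆ Dom b ∧ b ⊆ closure (Iminus a) ∧
  symmDiff a b ⊆ O ∧ edge b ⊆ edge a ∪ ((frontier (Iminus a) \ a) ∩ O)


/-- Through every point of the causal horizon `∂I⁻(W)` of a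
future-infinite causal worldline `W` there passes a future-infinite null ray
contained in `∂I⁻(W)`. -/
theorem stmt4 {n : ℕ} (hn : 0 < n) (W : Set (M n)) (hW : IsWorldline W)
    (p : M n) (hp : p ∈ frontier (Iminus W)) :
    ∃ v : E n, ‖v‖ = 1 ∧
      ∀ t : ℝ, 0 ≤ t → p + t • (((1 : ℝ), v) : M n) ∈ frontier (Iminus W) := by
  obtain ⟨t₀, x, hx, hWeq⟩ := hW
  subst hWeq
  set g : E n → ℝ → ℝ := fun y s => s - dist y (x s) with hgdef
  -- monotonicity of g y on [t₀, ∞)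
  have hgmono : ∀ y : E n, ∀ s s' : ℝ, t₀ ≤ s → s ≤ s' → g y s ≤ g y s' := by
    intro y s s' hs hss
    have h1 : dist y (x s') ≤ dist y (x s) + dist (x s) (x s') := dist_triangle _ _ _
    have h2 : dist (x s) (x s') ≤ 1 * dist s s' :=
      hx.dist_le_mul s hs s' (le_trans hs hss)
    have h3 : dist s s' = s' - s := by rw [Real.dist_eq, abs_of_nonpos (by linarith)]; ring
    simp only [hgdef]
    rw [h3] at h2
    linarith
  -- membership in Iminus W
  have hmem : ∀ q : M n, q ∈ Iminus {p : M n | t₀ ≤ p.1 ∧ p.2 = x p.1} ↔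
      ∃ s, t₀ ≤ s ∧ q.1 < g q.2 s := by
    intro q
    constructor
    · rintro ⟨r, ⟨hr1, hr2⟩, hc⟩
      refine ⟨r.1, hr1, ?_⟩
      unfold chron at hc
      rw [hr2] at hc
      simp only [hgdef]
      linarith
    · rintro ⟨s, hs, h⟩
      refine ⟨(s, x s), ⟨hs, rfl⟩, ?_⟩
      unfold chron
      simp only [hgdef] at h
      simpa using by linarith
  by_cases hB : BddAbove (g p.2 '' Ici t₀)
  · -- bounded case: define L
    have hBy : ∀ y : E n, BddAbove (g y '' Ici t₀) := by
      intro y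
      obtain ⟨B, hBb⟩ := hB
      refine ⟨B + dist p.2 y, ?_⟩
      rintro a ⟨s, hs, rfl⟩
      have h1 : g p.2 s ≤ B := hBb ⟨s, hs, rfl⟩
      have h2 : dist p.2 (x s) ≤ dist p.2 y + dist y (x s) := dist_triangle _ _ _
      simp only [hgdef] at h1 ⊢
      linarith
    have hne : ∀ y : E n, (g y '' Ici t₀).Nonempty :=
      fun y => ⟨g y t₀, t₀, self_mem_Ici, rfl⟩
    set L : E n → ℝ := fun y => sSup (g y '' Ici t₀) with hLdef
    have hLle : ∀ y y' : E n, L y ≤ L y' + dist y y' := by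
      intro y y'
      apply csSup_le (hne y)
      rintro a ⟨s, hs, rfl⟩
      have h1 : g y' s ≤ L y' := le_csSup (hBy y') ⟨s, hs, rfl⟩
      have h2 : dist y (x s) ≥ dist y' (x s) - dist y' y :=
        by have := dist_triangle y' y (x s); linarith
      have h3 : dist y' y = dist y y' := dist_comm _ _
      simp only [hgdef] at h1 ⊢
      linarith
    have hLcont : Continuous L := by
      refine LipschitzWith.continuous (K := 1) (LipschitzWith.of_dist_le_mul ?_)
      intro y y'
      rw [NNReal.coe_one, Real.dist_eq, one_mul, abs_sub_le_iff]
      constructor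
      · have := hLle y y'; linarith
      · have := hLle y' y; rw [dist_comm] at this; linarith
    have hmem2 : Iminus {p : M n | t₀ ≤ p.1 ∧ p.2 = x p.1} = {q : M n | q.1 < L q.2} := by
      ext q
      rw [hmem]
      constructor
      · rintro ⟨s, hs, h⟩
        exact lt_of_lt_of_le h (le_csSup (hBy q.2) ⟨s, hs, rfl⟩)
      · intro h
        obtain ⟨a, ⟨s, hs, rfl⟩, h2⟩ := exists_lt_of_lt_csSup (hne q.2) h
        exact ⟨s, hs, h2⟩
    have hcl : IsClosed {q : M n | q.1 ≤ L q.2} :=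
      isClosed_le continuous_fst (hLcont.comp continuous_snd)
    have hopen : IsOpen (Iminus {p : M n | t₀ ≤ p.1 ∧ p.2 = x p.1}) := by
      rw [hmem2]; exact isOpen_lt continuous_fst (hLcont.comp continuous_snd)
    have hfr : frontier (Iminus {p : M n | t₀ ≤ p.1 ∧ p.2 = x p.1}) =
        {q : M n | q.1 = L q.2} := by
      ext q
      rw [frontier, hopen.interior_eq]
      constructor
      · rintro ⟨h1, h2⟩
        have hle : q.1 ≤ L q.2 := by
          have hsub : Iminus {p : M n | t₀ ≤ p.1 ∧ p.2 = x p.1} ⊆ {q : M n | q.1 ≤ L q.2} := by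
            rw [hmem2]; intro r hr
            simp only [mem_setOf_eq] at hr ⊢
            exact le_of_lt hr
          exact closure_minimal hsub hcl h1
        rw [hmem2] at h2
        exact le_antisymm hle (not_lt.mp h2)
      · intro hq
        have hq' : q.1 = L q.2 := hq
        constructor
        · rw [Metric.mem_closure_iff]
          intro ε hε
          refine ⟨(q.1 - ε / 2, q.2), ?_, ?_⟩
          · rw [hmem2]
            show q.1 - ε / 2 < L q.2
            linarith [hq'.le]
          · have : dist q ((q.1 - ε / 2, q.2) : M n)
                = max (dist q.1 (q.1 - ε / 2)) (dist q.2 q.2) := Prod.dist_eq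
            rw [this, Real.dist_eq, dist_self]
            have : |q.1 - (q.1 - ε / 2)| = ε / 2 := by
              rw [abs_of_nonneg (by linarith)]; ring
            rw [this]
            rw [max_eq_left (by linarith)]
            linarith
        · rw [hmem2]
          intro hh
          exact absurd hh (by simp [hq'])
    have hpL : p.1 = L p.2 := by rw [hfr] at hp; exact hp
    -- the monotone sequence
    set a : ℕ → ℝ := fun k => g p.2 (t₀ + k) with hadef
    have hamono : Monotone a := by
      intro k k' hk
      exact hgmono p.2 _ _ (le_add_of_nonneg_right (Nat.cast_nonneg k))
        (by simp only [add_le_add_iff_left, Nat.cast_le]; exact hk)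
    have haub : ∀ k, a k ≤ L p.2 :=
      fun k => le_csSup (hBy p.2) ⟨t₀ + k, mem_Ici.mpr (le_add_of_nonneg_right (Nat.cast_nonneg k)), rfl⟩
    have haB : BddAbove (range a) := ⟨L p.2, by rintro b ⟨k, rfl⟩; exact haub k⟩
    have hsup : ⨆ k, a k = L p.2 := by
      apply le_antisymm (ciSup_le haub)
      apply csSup_le (hne p.2)
      rintro b ⟨s, hs, rfl⟩
      have h1 : g p.2 s ≤ a ⌈s - t₀⌉₊ := by
        apply hgmono p.2 _ _ hs
        have := Nat.le_ceil (s - t₀)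
        linarith
      exact h1.trans (le_ciSup haB _)
    have haL : Filter.Tendsto a Filter.atTop (nhds (L p.2)) := by
      have := tendsto_atTop_ciSup hamono haB
      rwa [hsup] at this
    -- distances tend to infinity
    have hdist : Filter.Tendsto (fun k : ℕ => dist p.2 (x (t₀ + k)))
        Filter.atTop Filter.atTop := by
      have heq : (fun k : ℕ => dist p.2 (x (t₀ + k))) = fun k : ℕ => (t₀ + k) - a k := by
        funext k; simp only [hadef, hgdef]; ring
      have h1 : Filter.Tendsto (fun k : ℕ => (t₀ + (k : ℝ)) + (- a k))
          Filter.atTop Filter.atTop :=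
        (Filter.tendsto_atTop_add_const_left _ t₀ tendsto_natCast_atTop_atTop).atTop_add haL.neg
      have heq2 : (fun k : ℕ => (t₀ + (k : ℝ)) - a k) = fun k : ℕ => (t₀ + (k : ℝ)) + (- a k) := by
        funext k; ring
      rw [heq, heq2]; exact h1
    obtain ⟨k₀, hk₀⟩ := Filter.eventually_atTop.mp (hdist.eventually_ge_atTop 1)
    set u : ℕ → E n := fun k =>
      (dist p.2 (x (t₀ + (k + k₀ : ℕ))))⁻¹ • (x (t₀ + (k + k₀ : ℕ)) - p.2) with hudef
    have hdk : ∀ k : ℕ, 1 ≤ dist p.2 (x (t₀ + (k + k₀ : ℕ))) :=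
      fun k => hk₀ (k + k₀) (Nat.le_add_left _ _)
    have hnormu : ∀ k, ‖u k‖ = 1 := by
      intro k
      have hD := hdk k
      have hD0 : dist p.2 (x (t₀ + (k + k₀ : ℕ))) ≠ 0 := by linarith
      simp only [hudef, norm_smul, norm_inv, Real.norm_eq_abs,
        abs_of_nonneg (by linarith : (0:ℝ) ≤ dist p.2 (x (t₀ + (k + k₀ : ℕ))))]
      rw [← dist_eq_norm', inv_mul_cancel₀ hD0]
    obtain ⟨v, hv, φ, hφ, hconv⟩ := (isCompact_sphere (0 : E n) 1).tendsto_subseq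
      (x := u) (fun k => mem_sphere_zero_iff_norm.mpr (hnormu k))
    have hvnorm : ‖v‖ = 1 := mem_sphere_zero_iff_norm.mp hv
    refine ⟨v, hvnorm, ?_⟩
    intro t ht
    have hcoord : p + t • (((1 : ℝ), v) : M n) = (p.1 + t, p.2 + t • v) := by
      apply Prod.ext <;> simp [mul_one]
    rw [hcoord, hfr]
    show p.1 + t = L (p.2 + t • v)
    -- upper bound
    have hub : L (p.2 + t • v) ≤ p.1 + t := by
      have h1 := hLle (p.2 + t • v) p.2
      have h2 : dist (p.2 + t • v) p.2 = t := by
        rw [dist_eq_norm]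
        simp [norm_smul, hvnorm, abs_of_nonneg ht]
      rw [hpL]; linarith
    -- lower bound via the subsequence
    set s : ℕ → ℝ := fun k => t₀ + ((φ k + k₀ : ℕ) : ℝ) with hsdef
    have hts : ∀ k, t₀ ≤ s k := fun k => le_add_of_nonneg_right (Nat.cast_nonneg _)
    have hfle : ∀ k, g (p.2 + t • v) (s k) ≤ L (p.2 + t • v) :=
      fun k => le_csSup (hBy _) ⟨s k, hts k, rfl⟩
    have hidx : Filter.Tendsto (fun k => φ k + k₀) Filter.atTop Filter.atTop := by
      apply Filter.tendsto_atTop_mono (fun k => (hφ.id_le k).trans (Nat.le_add_right _ _))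
        Filter.tendsto_id
    have hdist2 : Filter.Tendsto (fun k : ℕ => dist p.2 (x (s k)))
        Filter.atTop Filter.atTop := hdist.comp hidx
    have haL2 : Filter.Tendsto (fun k => a (φ k + k₀)) Filter.atTop (nhds (L p.2)) :=
      haL.comp hidx
    have huv : Filter.Tendsto (fun k => ‖u (φ k) - v‖) Filter.atTop (nhds 0) := by
      have := tendsto_iff_dist_tendsto_zero.mp hconv
      simpa [dist_eq_norm] using this
    have hR : Filter.Tendsto (fun k => a (φ k + k₀) + t - t * ‖u (φ k) - v‖)
        Filter.atTop (nhds (L p.2 + t)) := by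
      have := (haL2.add_const t).sub (huv.const_mul t)
      simpa using this
    have hlb : L p.2 + t ≤ L (p.2 + t • v) := by
      apply le_of_tendsto hR
      filter_upwards [hdist2.eventually_ge_atTop t] with k hk
      set m : ℕ := φ k + k₀ with hm
      have hsk : s k = t₀ + (m : ℝ) := rfl
      rw [hsk] at hk
      have hD1 : 1 ≤ dist p.2 (x (t₀ + (m : ℝ))) := hdk (φ k)
      set D := dist p.2 (x (t₀ + (m : ℝ))) with hDdef
      have hD0 : D ≠ 0 := by intro h; rw [h] at hD1; linarith
      have hw : x (t₀ + (m : ℝ)) - p.2 = D • u (φ k) := by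
        rw [hudef]
        simp only
        rw [← hm, ← hDdef, smul_smul, mul_inv_cancel₀ hD0, one_smul]
      have hsplit : p.2 + t • v - x (t₀ + (m : ℝ))
          = -((D - t) • u (φ k) + t • (u (φ k) - v)) := by
        have h1 : p.2 + t • v - x (t₀ + (m : ℝ)) = t • v - (x (t₀ + (m : ℝ)) - p.2) := by abel
        rw [h1, hw]
        module
      have key : dist (p.2 + t • v) (x (t₀ + (m : ℝ))) ≤ (D - t) + t * ‖u (φ k) - v‖ := by
        rw [dist_eq_norm, hsplit, norm_neg]
        refine (norm_add_le _ _).trans ?_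
        have e1 : ‖(D - t) • u (φ k)‖ = D - t := by
          rw [norm_smul]
          rw [hnormu (φ k), mul_one, Real.norm_eq_abs, abs_of_nonneg (by linarith : (0:ℝ) ≤ D - t)]
        have e2 : ‖t • (u (φ k) - v)‖ = t * ‖u (φ k) - v‖ := by
          rw [norm_smul, Real.norm_eq_abs, abs_of_nonneg ht]
        rw [e1, e2]
      have haeq : a m = (t₀ + (m : ℝ)) - D := rfl
      have hfk : g (p.2 + t • v) (s k)
          = (t₀ + (m : ℝ)) - dist (p.2 + t • v) (x (t₀ + (m : ℝ))) := rfl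
      have hfl := hfle k
      rw [hfk] at hfl
      rw [haeq]
      linarith
    rw [hpL]
    linarith
  · -- unbounded case: Iminus W is everything, frontier empty
    exfalso
    have huniv : Iminus {p : M n | t₀ ≤ p.1 ∧ p.2 = x p.1} = univ := by
      apply eq_univ_iff_forall.mpr
      intro q
      rw [hmem]
      obtain ⟨b, ⟨s, hs, rfl⟩, hlt⟩ := not_bddAbove_iff.mp hB (q.1 + dist q.2 p.2)
      refine ⟨s, hs, ?_⟩
      have h2 : dist q.2 (x s) ≤ dist q.2 p.2 + dist p.2 (x s) := dist_triangle _ _ _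
      simp only [hgdef] at hlt ⊢
      linarith
    rw [huniv, frontier_univ] at hp
    exact hp

end
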